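/- Let G be a group in which every maximal subgroup is normal and in which every proper subgroup is contained in a maximal subgroup, and let S ⊆ G. If S weakly generates G, then S generates G. -/

import Mathlib

/-- `S` weakly generates `G`: the image of `S` in the abelianization generates it. -/
def WeaklyGenerates {G : Type*} [Group G] (S : Set G) : Prop :=
  Subgroup.closure ((Abelianization.of : G →* Abelianization G) '' S) = ⊤

open scoped commutatorElement

theorem weakly_generates_implies_generates
    {G : Type*} [Group G]
    (hMN : ∀ M : Subgroup G, IsCoatom M → M.Normal)
    (hmax : ∀ H : Subgroup G, H ≠ ⊤ → ∃ M : Subgroup G, IsCoatom M ∧ H ≤ M)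
    (S : Set G) (hS : WeaklyGenerates S) : Subgroup.closure S = ⊤ := by
  by_contra h
  obtain ⟨M, hM, hSM⟩ := hmax _ h
  haveI hN := hMN M hM
  -- the commutator subgroup is contained in M
  have hcomm : commutator G ≤ M := by
    rw [commutator_def, Subgroup.commutator_le]
    intro x _ y _
    by_cases hx : x ∈ M
    · have h1 : x * y * x⁻¹ * y⁻¹ ∈ M := by
        have := hN.conj_mem x⁻¹ (M.inv_mem hx) y
        have := M.mul_mem hx this
        simpa [mul_assoc] using this
      simpa [commutatorElement_def, mul_assoc] using h1
    · have hlt : M < M ⊔ Subgroup.zpowers x := by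
        refine lt_of_le_of_ne le_sup_left ?_
        intro he
        exact hx (he ▸ Subgroup.mem_sup_right (Subgroup.mem_zpowers x) : x ∈ M)
      have htop : M ⊔ Subgroup.zpowers x = ⊤ := hM.2 _ hlt
      have hy : y ∈ M ⊔ Subgroup.zpowers x := htop ▸ Subgroup.mem_top y
      rw [← SetLike.mem_coe, Subgroup.normal_mul] at hy
      obtain ⟨m, hm, z, hz, rfl⟩ := hy
      obtain ⟨n, rfl⟩ := hz
      have key : ⁅x, m * x ^ n⁆ = x * m * x⁻¹ * m⁻¹ := by
        simp only [commutatorElement_def, mul_inv_rev]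
        group
      rw [key]
      have := hN.conj_mem m hm x
      have := M.mul_mem this (M.inv_mem hm)
      simpa [mul_assoc] using this
  -- the closure of the image of S in the abelianization is the image of the closure
  have hmap : Subgroup.map (Abelianization.of : G →* Abelianization G)
      (Subgroup.closure S) = ⊤ := by
    rw [MonoidHom.map_closure]; exact hS
  -- M = ⊤, contradiction
  apply hM.1
  rw [eq_top_iff]
  intro g _
  have hg : (Abelianization.of : G →* Abelianization G) g ∈
      Subgroup.map (Abelianization.of : G →* Abelianization G) (Subgroup.closure S) := by
    rw [hmap]; exact Subgroup.mem_top _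
  obtain ⟨s, hs, hsg⟩ := hg
  have hker : s⁻¹ * g ∈ commutator G := by
    have : (Abelianization.of : G →* Abelianization G) (s⁻¹ * g) = 1 := by
      rw [map_mul, map_inv, hsg]
      group
    exact (QuotientGroup.eq_one_iff _).mp this
  have hsM : s ∈ M := hSM hs
  have : s * (s⁻¹ * g) ∈ M := M.mul_mem hsM (hcomm hker)
  simpa using this
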